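/- Let u₀ > 0 and let g : ℝ → ℝ be continuous with g(v) > 0 for all v ∈ (0, u₀], and suppose g(v)/v → 1 as v → 0⁺. Suppose u : [0,∞) → ℝ is differentiable with u(0) = u₀, u(t) > 0 for all t ≥ 0, and u′(t) = −g(u(t)) for all t ≥ 0. Then u(t) → 0 as t → ∞ and (log u(t))/t → −1 as t → ∞; in particular u(t) decays like e^{−t}. -/

import Mathlib

open Set Filter Real Topology

/-- For the limiting ODE `u' = -g(u)` with `g > 0` on `(0, u₀]` and
`g(v)/v → 1` as `v → 0⁺`, solutions started from `u₀ > 0` that stay positive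
tend to `0` and satisfy `log u(t) / t → -1`, i.e. `u(t)` decays like `e^{-t}`. -/
theorem qvoter_ode_decay (u₀ : ℝ) (hu₀ : 0 < u₀) (g : ℝ → ℝ)
    (hg : Continuous g) (hgpos : ∀ v ∈ Set.Ioc (0 : ℝ) u₀, 0 < g v)
    (hglim : Filter.Tendsto (fun v => g v / v)
      (nhdsWithin 0 (Set.Ioi 0)) (nhds 1))
    (u : ℝ → ℝ) (hu0 : u 0 = u₀)
    (hupos : ∀ t, 0 ≤ t → 0 < u t)
    (hode : ∀ t ∈ Set.Ici (0 : ℝ),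
      HasDerivWithinAt u (-g (u t)) (Set.Ici (0 : ℝ)) t) :
    Filter.Tendsto u Filter.atTop (nhds 0) ∧
    Filter.Tendsto (fun t => Real.log (u t) / t) Filter.atTop (nhds (-1)) := by
  have hucont : ContinuousOn u (Ici 0) := fun t ht => (hode t ht).continuousWithinAt
  -- Step A: u t ≤ u₀ for all t ≥ 0
  have hle : ∀ t, 0 ≤ t → u t ≤ u₀ := by
    intro t ht
    have := image_le_of_deriv_right_lt_deriv_boundary
      (f := u) (f' := fun x => -g (u x)) (a := 0) (b := t)
      (hucont.mono (Icc_subset_Ici_self))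
      (fun x hx => (hode x hx.1).mono (Ici_subset_Ici.2 hx.1))
      (B := fun _ => u₀) (B' := fun _ => 0)
      (by rw [hu0])
      (fun x => hasDerivAt_const x u₀)
      (by
        intro x hx hux
        have hux' : u x = u₀ := hux
        have : 0 < g (u x) := hgpos (u x) ⟨hupos x hx.1, hux'.le⟩
        show -g (u x) < (0 : ℝ)
        linarith)
    exact this ⟨ht, le_rfl⟩
  -- Step B: u is antitone on [0, ∞)
  have hmono : ∀ s t, 0 ≤ s → s ≤ t → u t ≤ u s := by
    intro s t hs hst
    have := image_le_of_deriv_right_lt_deriv_boundary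
      (f := u) (f' := fun x => -g (u x)) (a := s) (b := t)
      (hucont.mono (fun x hx => le_trans hs hx.1))
      (fun x hx => (hode x (le_trans hs hx.1)).mono (Ici_subset_Ici.2 (le_trans hs hx.1)))
      (B := fun _ => u s) (B' := fun _ => 0)
      le_rfl
      (fun x => hasDerivAt_const x (u s))
      (by
        intro x hx hux
        have hux' : u x = u s := hux
        have : 0 < g (u x) := hgpos (u x) ⟨hupos x (le_trans hs hx.1),
          hux'.le.trans (hle s hs)⟩
        show -g (u x) < (0 : ℝ)
        linarith)
    exact this ⟨hst, le_rfl⟩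
  -- Step C: the limit L
  set v : ℝ → ℝ := fun t => u (max t 0) with hv
  have hvanti : Antitone v := by
    intro a b hab
    exact hmono (max a 0) (max b 0) (le_max_right a 0) (max_le_max hab le_rfl)
  have hvbdd : BddBelow (range v) := by
    refine ⟨0, ?_⟩
    rintro x ⟨t, rfl⟩
    exact (hupos _ (le_max_right t 0)).le
  set L : ℝ := ⨅ t, v t with hLdef
  have hvL : Tendsto v atTop (𝓝 L) := tendsto_atTop_ciInf hvanti hvbdd
  have hL0 : 0 ≤ L := le_ciInf fun t => (hupos _ (le_max_right t 0)).le
  have hLt : ∀ t, 0 ≤ t → L ≤ u t := by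
    intro t ht
    have := ciInf_le hvbdd t
    simpa [hv, max_eq_left ht] using this
  have hLu₀ : L ≤ u₀ := by simpa [hu0] using hLt 0 le_rfl
  -- Step D: L = 0
  have hLzero : L = 0 := by
    by_contra hneq
    have hL : 0 < L := lt_of_le_of_ne hL0 (Ne.symm hneq)
    obtain ⟨x₀, hx₀, hminx⟩ := isCompact_Icc.exists_isMinOn ⟨L, le_rfl, hLu₀⟩
      hg.continuousOn
    set c : ℝ := g x₀ with hc
    have hcpos : 0 < c := hgpos x₀ ⟨lt_of_lt_of_le hL hx₀.1, hx₀.2⟩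
    set b : ℝ := 2 * (u₀ - L) / c + 1 with hb
    have hbpos : 0 < b := by
      have h0 : 0 ≤ 2 * (u₀ - L) / c := div_nonneg (by linarith) hcpos.le
      rw [hb]; linarith
    have hBder : ∀ x : ℝ, HasDerivAt (fun x => u₀ - c / 2 * x) (-(c / 2)) x := by
      intro x
      have := (hasDerivAt_const x u₀).sub ((hasDerivAt_id x).const_mul (c / 2))
      simp at this
      exact this
    have hub := image_le_of_deriv_right_lt_deriv_boundary
      (f := u) (f' := fun x => -g (u x)) (a := 0) (b := b)
      (hucont.mono (Icc_subset_Ici_self))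
      (fun x hx => (hode x hx.1).mono (Ici_subset_Ici.2 hx.1))
      (B := fun x => u₀ - c / 2 * x) (B' := fun _ => -(c / 2))
      (by simp [hu0])
      hBder
      (by
        intro x hx _
        have h1 : u x ∈ Icc L u₀ := ⟨hLt x hx.1, hle x hx.1⟩
        have h2 : c ≤ g (u x) := isMinOn_iff.1 hminx (u x) h1
        show -g (u x) < -(c / 2)
        linarith)
    have h3 : u b ≤ u₀ - c / 2 * b := hub ⟨hbpos.le, le_rfl⟩
    have h4 : L ≤ u b := hLt b hbpos.le
    have : c / 2 * b = (u₀ - L) + c / 2 := by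
      rw [hb, mul_add, mul_div_assoc', show c / 2 * (2 * (u₀ - L)) = c * (u₀ - L) by ring,
        mul_div_cancel_left₀ _ hcpos.ne']
      ring
    nlinarith
  rw [hLzero] at hvL
  have huv : Tendsto u atTop (𝓝 0) := by
    apply hvL.congr'
    filter_upwards [eventually_ge_atTop (0 : ℝ)] with t ht
    simp [hv, max_eq_left ht]
  refine ⟨huv, ?_⟩
  -- Step E: log u(t)/t → -1
  have huI : Tendsto u atTop (𝓝[>] 0) := by
    apply tendsto_nhdsWithin_of_tendsto_nhds_of_eventually_within _ huv
    filter_upwards [eventually_ge_atTop (0 : ℝ)] with t ht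
    exact hupos t ht
  set φ : ℝ → ℝ := fun t => -(g (u t)) / u t + 1 with hφdef
  have hφ : Tendsto φ atTop (𝓝 0) := by
    have h1 : Tendsto (fun t => g (u t) / u t) atTop (𝓝 1) := hglim.comp huI
    have h2 := (h1.neg).add_const 1
    simp only [neg_add_cancel] at h2
    apply h2.congr
    intro t
    simp [hφdef, neg_div]
  set h : ℝ → ℝ := fun t => Real.log (u t) + t with hhdef
  have hhderiv : ∀ s, 0 ≤ s → ∀ t ∈ Ici s, HasDerivWithinAt h (φ t) (Ici s) t := by
    intro s hs t ht
    have h1 : HasDerivWithinAt u (-g (u t)) (Ici s) t :=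
      (hode t (le_trans hs ht)).mono (Ici_subset_Ici.2 hs)
    have h2 := (h1.log (ne_of_gt (hupos t (le_trans hs ht)))).add
      (hasDerivWithinAt_id t (Ici s))
    exact h2
  have key : Tendsto (fun t => h t / t) atTop (𝓝 0) := by
    rw [Metric.tendsto_nhds]
    intro ε hε
    have hε2 : 0 < ε / 2 := by positivity
    obtain ⟨T, hT⟩ := eventually_atTop.1
      ((Metric.tendsto_nhds.1 hφ (ε / 2) hε2).and (eventually_ge_atTop (0 : ℝ)))
    have hT0 : 0 ≤ T := (hT T le_rfl).2
    have hmvt : ∀ t, T ≤ t → |h t - h T| ≤ ε / 2 * (t - T) := by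
      intro t ht
      have := (convex_Ici T).norm_image_sub_le_of_norm_hasDerivWithin_le
        (f := h) (f' := φ)
        (fun x hx => hhderiv T hT0 x hx)
        (fun x hx => by
          have := (hT x hx).1
          rw [Real.dist_eq, sub_zero] at this
          exact this.le)
        (mem_Ici.2 le_rfl) (mem_Ici.2 ht)
      rwa [Real.norm_eq_abs, Real.norm_eq_abs, abs_of_nonneg (sub_nonneg.2 ht)] at this
    filter_upwards [eventually_ge_atTop (max T 1),
      eventually_gt_atTop (2 * |h T| / ε)] with t h1 h2
    have htT : T ≤ t := le_trans (le_max_left T 1) h1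
    have ht1 : (1 : ℝ) ≤ t := le_trans (le_max_right T 1) h1
    have ht0 : 0 < t := lt_of_lt_of_le zero_lt_one ht1
    have h3 : |h t - h T| ≤ ε / 2 * (t - T) := hmvt t htT
    have h4 : |h T| < ε / 2 * t := by
      rw [div_lt_iff₀ hε] at h2
      nlinarith
    have h5 : |h t| < ε * t := by
      have := abs_sub_abs_le_abs_sub (h t) (h T)
      nlinarith
    rw [Real.dist_eq, sub_zero, abs_div, abs_of_pos ht0, div_lt_iff₀ ht0]
    linarith
  have keym := key.sub_const 1
  rw [zero_sub] at keym
  apply keym.congr'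
  filter_upwards [eventually_gt_atTop (0 : ℝ)] with t ht
  have : h t / t - 1 = Real.log (u t) / t := by
    field_simp [hhdef]
    simp [hhdef]
  exact this
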